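/- Suppose v_{i,j} ≤ B_i for every bidder i and every query j. Then for every deterministic tie-breaking rule and every FPA equilibrium bid profile, OPT ≤ 2 · LW; i.e., under this assumption the price of anarchy of the first-price auction with both ROS and budget constraints is at most 2. -/

import Mathlib

open Finset
open scoped Classical

noncomputable section

/-- An allocation: each entry in `[0,1]`, and each query allocated total probability at most 1. -/
def IsAlloc {n q : ℕ} (π : Fin n → Fin q → ℝ) : Prop :=
  (∀ i j, 0 ≤ π i j) ∧ (∀ i j, π i j ≤ 1) ∧ ∀ j, ∑ i, π i j ≤ 1

/-- An integral (deterministic) allocation. -/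
def IsIntegralAlloc {n q : ℕ} (π : Fin n → Fin q → ℝ) : Prop :=
  IsAlloc π ∧ ∀ i j, π i j = 0 ∨ π i j = 1

/-- Liquid welfare of an allocation. -/
def allocLW {n q : ℕ} (B : Fin n → ℝ) (v π : Fin n → Fin q → ℝ) : ℝ :=
  ∑ i, min (B i) (∑ j, π i j * v i j)

/-- A deterministic tie-breaking / winner rule for first-price auctions:
given a bid profile, it selects on each query a bidder whose bid is maximal. -/
def IsWinnerRule {n q : ℕ} (W : (Fin n → Fin q → ℝ) → Fin q → Fin n) : Prop :=
  ∀ (b : Fin n → Fin q → ℝ) (j : Fin q) (i : Fin n), b i j ≤ b (W b j) j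

/-- The set of queries bidder `i` wins under bid profile `b`. -/
def fpaN {n q : ℕ} (W : (Fin n → Fin q → ℝ) → Fin q → Fin n)
    (b : Fin n → Fin q → ℝ) (i : Fin n) : Finset (Fin q) :=
  Finset.univ.filter fun j => W b j = i

/-- The total value bidder `i` obtains. -/
def fpaV {n q : ℕ} (v : Fin n → Fin q → ℝ) (W : (Fin n → Fin q → ℝ) → Fin q → Fin n)
    (b : Fin n → Fin q → ℝ) (i : Fin n) : ℝ :=
  ∑ j ∈ fpaN W b i, v i j

/-- The spend (winning bid) on query `j`. -/
def fpaSpendQ {n q : ℕ} (W : (Fin n → Fin q → ℝ) → Fin q → Fin n)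
    (b : Fin n → Fin q → ℝ) (j : Fin q) : ℝ :=
  b (W b j) j

/-- The total spend of bidder `i`. -/
def fpaSpendI {n q : ℕ} (W : (Fin n → Fin q → ℝ) → Fin q → Fin n)
    (b : Fin n → Fin q → ℝ) (i : Fin n) : ℝ :=
  ∑ j ∈ fpaN W b i, b i j

/-- Liquid welfare of a bid profile in FPA. -/
def fpaLW {n q : ℕ} (B : Fin n → ℝ) (v : Fin n → Fin q → ℝ)
    (W : (Fin n → Fin q → ℝ) → Fin q → Fin n) (b : Fin n → Fin q → ℝ) : ℝ :=
  ∑ i, min (B i) (fpaV v W b i)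

/-- Equilibrium of a first-price auction with ROS and budget constraints:
bids are nonnegative, each bidder satisfies their constraints, and for any deviation
of a single bidder, either the bidder's value does not increase, or a constraint is violated. -/
def IsFpaEq {n q : ℕ} (B : Fin n → ℝ) (v : Fin n → Fin q → ℝ)
    (W : (Fin n → Fin q → ℝ) → Fin q → Fin n) (b : Fin n → Fin q → ℝ) : Prop :=
  (∀ i j, 0 ≤ b i j) ∧
  (∀ i, fpaSpendI W b i ≤ min (B i) (fpaV v W b i)) ∧
  (∀ i (b' : Fin q → ℝ), (∀ j, 0 ≤ b' j) →
    (∑ j ∈ fpaN W (Function.update b i b') i, v i j ≤ fpaV v W b i) ∨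
    (min (B i) (∑ j ∈ fpaN W (Function.update b i b') i, v i j)
      < ∑ j ∈ fpaN W (Function.update b i b') i, b' j))


private lemma minAdd (Bv a c : ℝ) (hc : 0 ≤ c) : min Bv (a + c) ≤ min Bv a + c := by
  rcases le_total a Bv with h | h
  · rw [min_eq_right h]
    exact le_trans (min_le_right _ _) le_rfl
  · rw [min_eq_left h]
    exact le_trans (min_le_left _ _) (by linarith)

private lemma selection {ι : Type*} [DecidableEq ι] (d p π : ι → ℝ) (S : Finset ι) :
    (∀ j ∈ S, 0 < d j) → (∀ j ∈ S, 0 ≤ p j) → (∀ j ∈ S, 0 ≤ π j) → (∀ j ∈ S, π j ≤ 1) →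
    ∀ c : ℝ, 0 ≤ c → c < ∑ j ∈ S, π j * d j →
    ∃ Q : Finset ι, ∃ k : ι, Q ⊆ S ∧ k ∈ S ∧ k ∉ Q ∧ (∑ j ∈ Q, d j) ≤ c ∧
      c < (∑ j ∈ Q, d j) + d k ∧
      d k * (∑ j ∈ Q, p j) + p k * ((∑ j ∈ S, π j * d j) - c) ≤ d k * ∑ j ∈ S, π j * p j := by
  induction S using Finset.strongInduction with
  | _ S IH =>
    intro hd hp hπ0 hπ1 c hc hcd
    have hSne : S.Nonempty := by
      rcases S.eq_empty_or_nonempty with h | h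
      · subst h; simp at hcd; linarith
      · exact h
    obtain ⟨a, haS, hamin⟩ := S.exists_min_image (fun j => p j / d j) hSne
    have hratio : ∀ j ∈ S, p a * d j ≤ p j * d a := by
      intro j hj
      have h1 := hamin j hj
      have h2 := (div_le_div_iff₀ (hd a haS) (hd j hj)).mp h1
      linarith
    rcases lt_or_ge c (d a) with hca | hca
    · refine ⟨∅, a, Finset.empty_subset _, haS, Finset.notMem_empty _, by simpa using hc,
        by simpa using hca, ?_⟩
      simp only [Finset.sum_empty, mul_zero, zero_add]
      have h1 : p a * (∑ j ∈ S, π j * d j) ≤ d a * ∑ j ∈ S, π j * p j := by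
        rw [Finset.mul_sum, Finset.mul_sum]
        apply Finset.sum_le_sum
        intro j hj
        nlinarith [hπ0 j hj, hratio j hj]
      nlinarith [hp a haS, hc]
    · set S' := S.erase a with hS'
      have hsub : S' ⊂ S := Finset.erase_ssubset haS
      have hsum : ∀ f : ι → ℝ, ∑ j ∈ S, f j = f a + ∑ j ∈ S', f j := fun f =>
        (Finset.add_sum_erase S f haS).symm
      have hc' : (0:ℝ) ≤ c - d a := by linarith
      have hlt' : c - d a < ∑ j ∈ S', π j * d j := by
        have h1 : ∑ j ∈ S, π j * d j = π a * d a + ∑ j ∈ S', π j * d j := hsum _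
        have h2 : π a * d a ≤ d a := by nlinarith [hπ1 a haS, hπ0 a haS, (hd a haS).le]
        linarith
      obtain ⟨Q', k, hQ'sub, hkS', hkQ', hQd, hQdk, hQp⟩ :=
        IH S' hsub (fun j hj => hd j (Finset.mem_of_mem_erase hj))
          (fun j hj => hp j (Finset.mem_of_mem_erase hj))
          (fun j hj => hπ0 j (Finset.mem_of_mem_erase hj))
          (fun j hj => hπ1 j (Finset.mem_of_mem_erase hj))
          (c - d a) hc' hlt'
      have haQ' : a ∉ Q' := fun h => (Finset.notMem_erase a S) (hQ'sub h)
      have hkS : k ∈ S := Finset.mem_of_mem_erase hkS'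
      have hka : k ≠ a := Finset.ne_of_mem_erase hkS'
      refine ⟨insert a Q', k, ?_, hkS, ?_, ?_, ?_, ?_⟩
      · exact Finset.insert_subset haS (hQ'sub.trans (Finset.erase_subset _ _))
      · simp [Finset.mem_insert, hka, hkQ']
      · rw [Finset.sum_insert haQ']; linarith
      · rw [Finset.sum_insert haQ']; linarith
      · rw [Finset.sum_insert haQ']
        have hDsplit : ∑ j ∈ S, π j * d j = π a * d a + ∑ j ∈ S', π j * d j := hsum _
        have hPsplit : ∑ j ∈ S, π j * p j = π a * p a + ∑ j ∈ S', π j * p j := hsum _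
        have hrk : p a * d k ≤ p k * d a := hratio k hkS
        have hπa1 : π a ≤ 1 := hπ1 a haS
        have hint : 0 ≤ (1 - π a) * (p k * d a - p a * d k) :=
          mul_nonneg (by linarith) (by linarith)
        rw [hDsplit, hPsplit]
        nlinarith [hQp, hint]

private lemma core {ι : Type*} [Fintype ι] (B V : ℝ) (hB : 0 < B) (hV : 0 ≤ V)
    (v p π : ι → ℝ) (hv : ∀ j, 0 ≤ v j) (hvB : ∀ j, v j ≤ B) (hp : ∀ j, 0 ≤ p j)
    (hπ0 : ∀ j, 0 ≤ π j) (hπ1 : ∀ j, π j ≤ 1)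
    (H : ∀ T : Finset ι, (∑ j ∈ T, v j ≤ V) ∨ (min B (∑ j ∈ T, v j) ≤ ∑ j ∈ T, p j)) :
    min B (∑ j, π j * v j) ≤ min B V + ∑ j, π j * p j := by
  classical
  have hPnn : 0 ≤ ∑ j, π j * p j :=
    Finset.sum_nonneg fun j _ => mul_nonneg (hπ0 j) (hp j)
  rcases le_or_gt B V with hBV | hVB
  · calc min B (∑ j, π j * v j) ≤ B := min_le_left _ _
      _ = min B V := (min_eq_left hBV).symm
      _ ≤ min B V + ∑ j, π j * p j := le_add_of_nonneg_right hPnn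
  · have hminV : min B V = V := min_eq_right hVB.le
    set S : Finset ι := Finset.univ.filter (fun j => p j < v j) with hSdef
    -- Subclaim K
    have K : ∀ σ : ι → ℝ, (∀ j, 0 ≤ σ j) → (∀ j, σ j ≤ 1) →
        (∑ j ∈ S, σ j * v j ≤ B) → ∑ j ∈ S, σ j * (v j - p j) ≤ V := by
      intro σ hσ0 hσ1 hσB
      by_contra hK
      push_neg at hK
      have hd : ∀ j ∈ S, 0 < v j - p j := by
        intro j hj
        have : p j < v j := (Finset.mem_filter.mp hj).2
        linarith
      obtain ⟨Q, k, hQS, hkS, hkQ, hQd, hQdk, hQp⟩ :=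
        selection (fun j => v j - p j) p σ S hd (fun j _ => hp j) (fun j _ => hσ0 j)
          (fun j _ => hσ1 j) V hV hK
      have hdk : 0 < v k - p k := hd k hkS
      have hQpS : ∑ j ∈ Q, p j ≤ ∑ j ∈ S, σ j * p j := by
        have h1 : 0 ≤ p k * ((∑ j ∈ S, σ j * (v j - p j)) - V) :=
          mul_nonneg (hp k) (by linarith)
        have h2 : (v k - p k) * ∑ j ∈ Q, p j ≤ (v k - p k) * ∑ j ∈ S, σ j * p j := by
          nlinarith [hQp]
        exact le_of_mul_le_mul_left h2 hdk
      have hsplit : ∑ j ∈ S, σ j * (v j - p j)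
          = (∑ j ∈ S, σ j * v j) - ∑ j ∈ S, σ j * p j := by
        rw [← Finset.sum_sub_distrib]
        exact Finset.sum_congr rfl fun j _ => by ring
      have hσpB : ∑ j ∈ S, σ j * p j < B - V := by
        rw [hsplit] at hK; linarith
      have hvk : v k ≤ V := by
        rcases H {k} with h | h
        · simpa using h
        · exfalso
          simp only [Finset.sum_singleton] at h
          rw [min_eq_right (hvB k)] at h
          linarith
      have hkQsum : ∀ f : ι → ℝ, ∑ j ∈ insert k Q, f j = f k + ∑ j ∈ Q, f j := fun f =>
        Finset.sum_insert hkQ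
      have hT'pd : ∑ j ∈ insert k Q, (v j - p j)
          = (∑ j ∈ insert k Q, v j) - ∑ j ∈ insert k Q, p j := Finset.sum_sub_distrib _ _
      have hT'd : V < ∑ j ∈ insert k Q, (v j - p j) := by rw [hkQsum]; linarith
      have hT'p : ∑ j ∈ insert k Q, p j < B := by
        rw [hkQsum]; linarith
      have hT'pnn : 0 ≤ ∑ j ∈ insert k Q, p j :=
        Finset.sum_nonneg fun j _ => hp j
      have hT'v : V < ∑ j ∈ insert k Q, v j := by rw [hT'pd] at hT'd; linarith
      rcases H (insert k Q) with h | h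
      · linarith
      · rcases le_or_gt (∑ j ∈ insert k Q, v j) B with hle | hgt
        · rw [min_eq_right hle] at h
          rw [hT'pd] at hT'd; linarith
        · rw [min_eq_left hgt.le] at h; linarith
    -- combine
    have hSc : ∀ j ∈ Finset.univ.filter (fun j => ¬ p j < v j), π j * v j ≤ π j * p j := by
      intro j hj
      have : v j ≤ p j := le_of_not_gt (Finset.mem_filter.mp hj).2
      exact mul_le_mul_of_nonneg_left this (hπ0 j)
    have hScnn : 0 ≤ ∑ j ∈ Finset.univ.filter (fun j => ¬ p j < v j), π j * p j :=
      Finset.sum_nonneg fun j _ => mul_nonneg (hπ0 j) (hp j)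
    have hYle : ∑ j, π j * v j
        ≤ (∑ j ∈ S, π j * v j) + ∑ j ∈ Finset.univ.filter (fun j => ¬ p j < v j), π j * p j := by
      rw [← Finset.sum_filter_add_sum_filter_not Finset.univ (fun j => p j < v j)
        (fun j => π j * v j)]
      have := Finset.sum_le_sum hSc
      linarith
    have hPsplit : (∑ j ∈ S, π j * p j)
        + ∑ j ∈ Finset.univ.filter (fun j => ¬ p j < v j), π j * p j = ∑ j, π j * p j :=
      Finset.sum_filter_add_sum_filter_not Finset.univ (fun j => p j < v j) (fun j => π j * p j)
    have hC : min B (∑ j ∈ S, π j * v j) ≤ V + ∑ j ∈ S, π j * p j := by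
      have hSPnn : 0 ≤ ∑ j ∈ S, π j * p j :=
        Finset.sum_nonneg fun j _ => mul_nonneg (hπ0 j) (hp j)
      rcases le_or_gt (∑ j ∈ S, π j * v j) B with h | h
      · have h2 := K π hπ0 hπ1 h
        have hsplit : ∑ j ∈ S, π j * (v j - p j)
            = (∑ j ∈ S, π j * v j) - ∑ j ∈ S, π j * p j := by
          rw [← Finset.sum_sub_distrib]
          exact Finset.sum_congr rfl fun j _ => by ring
        rw [hsplit] at h2
        calc min B (∑ j ∈ S, π j * v j) ≤ ∑ j ∈ S, π j * v j := min_le_right _ _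
          _ ≤ V + ∑ j ∈ S, π j * p j := by linarith
      · have hY0 : 0 < ∑ j ∈ S, π j * v j := lt_trans hB h
        set t : ℝ := B / (∑ j ∈ S, π j * v j) with htdef
        have ht0 : 0 < t := div_pos hB hY0
        have ht1 : t ≤ 1 := by
          rw [htdef, div_le_one hY0]; linarith
        have hσsum : ∑ j ∈ S, (t * π j) * v j = B := by
          have : ∑ j ∈ S, (t * π j) * v j = t * ∑ j ∈ S, π j * v j := by
            rw [Finset.mul_sum]
            exact Finset.sum_congr rfl fun j _ => by ring
          rw [this, htdef, div_mul_cancel₀ _ (ne_of_gt hY0)]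
        have hσ1 : ∀ j, t * π j ≤ 1 := fun j => by nlinarith [hπ1 j, hπ0 j, ht0.le]
        have h2 : ∑ j ∈ S, (t * π j) * (v j - p j) ≤ V :=
          K (fun j => t * π j) (fun j => mul_nonneg ht0.le (hπ0 j)) hσ1 (le_of_eq hσsum)
        have h3 : ∑ j ∈ S, (t * π j) * (v j - p j)
            = B - t * ∑ j ∈ S, π j * p j := by
          have e1 : ∑ j ∈ S, (t * π j) * (v j - p j)
              = (∑ j ∈ S, t * π j * v j) - ∑ j ∈ S, t * (π j * p j) := by
            rw [← Finset.sum_sub_distrib]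
            exact Finset.sum_congr rfl fun j _ => by ring
          rw [e1, hσsum, ← Finset.mul_sum]
        rw [h3] at h2
        have h4 : t * ∑ j ∈ S, π j * p j ≤ ∑ j ∈ S, π j * p j := by
          nlinarith
        calc min B (∑ j ∈ S, π j * v j) ≤ B := min_le_left _ _
          _ ≤ V + ∑ j ∈ S, π j * p j := by linarith
    calc min B (∑ j, π j * v j)
        ≤ min B ((∑ j ∈ S, π j * v j)
            + ∑ j ∈ Finset.univ.filter (fun j => ¬ p j < v j), π j * p j) :=
          min_le_min le_rfl hYle
      _ ≤ min B (∑ j ∈ S, π j * v j)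
            + ∑ j ∈ Finset.univ.filter (fun j => ¬ p j < v j), π j * p j :=
          minAdd _ _ _ hScnn
      _ ≤ V + ∑ j, π j * p j := by linarith
      _ = min B V + ∑ j, π j * p j := by rw [hminV]

theorem stmt8 (n q : ℕ) (B : Fin n → ℝ) (v : Fin n → Fin q → ℝ)
    (hB : ∀ i, 0 < B i) (hv : ∀ i j, 0 ≤ v i j)
    (hvB : ∀ i j, v i j ≤ B i)
    (W : (Fin n → Fin q → ℝ) → Fin q → Fin n) (hW : IsWinnerRule W)
    (b : Fin n → Fin q → ℝ) (hb : IsFpaEq B v W b)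
    (OPT : ℝ)
    (hOPT : IsGreatest {w : ℝ | ∃ π : Fin n → Fin q → ℝ, IsAlloc π ∧ w = allocLW B v π} OPT) :
    OPT ≤ 2 * fpaLW B v W b := by
  classical
  obtain ⟨π, hπ, hOPTeq⟩ := hOPT.1
  obtain ⟨hπ0, hπ1, hπsum⟩ := hπ
  obtain ⟨hb0, hbc, hbeq⟩ := hb
  set p : Fin q → ℝ := fun j => fpaSpendQ W b j with hpdef
  have hp0 : ∀ j, 0 ≤ p j := fun j => hb0 _ _
  -- equilibrium implies the set condition H for each bidder
  have eqH : ∀ i (T : Finset (Fin q)),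
      (∑ j ∈ T, v i j ≤ fpaV v W b i) ∨
      (min (B i) (∑ j ∈ T, v i j) ≤ ∑ j ∈ T, p j) := by
    intro i T
    by_contra hcon
    push_neg at hcon
    obtain ⟨h1, h2⟩ := hcon
    set m := min (B i) (∑ j ∈ T, v i j) with hm
    set δ : ℝ := (m - ∑ j ∈ T, p j) / (q + 1) with hδdef
    have hq1 : (0:ℝ) < q + 1 := by positivity
    have hδ : 0 < δ := div_pos (by linarith) hq1
    set b' : Fin q → ℝ := fun j => if j ∈ T then p j + δ else 0 with hb'def
    have hb'0 : ∀ j, 0 ≤ b' j := by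
      intro j
      by_cases h : j ∈ T <;> simp only [hb'def, h, if_true, if_false]
      · linarith [hp0 j]
      · exact le_rfl
    have hTN : T ⊆ fpaN W (Function.update b i b') i := by
      intro j hj
      simp only [fpaN, Finset.mem_filter, Finset.mem_univ, true_and]
      by_contra hne
      have hle := hW (Function.update b i b') j i
      rw [Function.update_self] at hle
      rw [Function.update_of_ne hne] at hle
      have hle2 : b (W (Function.update b i b') j) j ≤ p j := hW b j _
      simp only [hb'def, hj, if_true] at hle
      linarith
    have hNv : ∑ j ∈ T, v i j ≤ ∑ j ∈ fpaN W (Function.update b i b') i, v i j :=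
      Finset.sum_le_sum_of_subset_of_nonneg hTN (fun j _ _ => hv i j)
    rcases hbeq i b' hb'0 with hA | hB'
    · linarith
    · have hs1 : ∑ j ∈ fpaN W (Function.update b i b') i, b' j
          ≤ ∑ j ∈ (univ : Finset (Fin q)), b' j :=
        Finset.sum_le_sum_of_subset_of_nonneg (Finset.subset_univ _) (fun j _ _ => hb'0 j)
      have hs2 : ∑ j ∈ (univ : Finset (Fin q)), b' j = ∑ j ∈ T, (p j + δ) := by
        rw [hb'def]
        rw [Finset.sum_ite_mem]
        rw [Finset.univ_inter]
      have hs3 : ∑ j ∈ T, (p j + δ) = (∑ j ∈ T, p j) + T.card * δ := by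
        rw [Finset.sum_add_distrib, Finset.sum_const, nsmul_eq_mul]
      have hcard : (T.card : ℝ) ≤ q := by
        have h := Finset.card_le_univ T
        simp only [Finset.card_univ, Fintype.card_fin] at h
        exact_mod_cast h
      have hqd : (T.card : ℝ) * δ ≤ q * δ := by nlinarith
      have hmδ : (∑ j ∈ T, p j) + (q + 1) * δ = m := by
        rw [hδdef]; field_simp; ring
      have hminmono : m ≤ min (B i) (∑ j ∈ fpaN W (Function.update b i b') i, v i j) :=
        min_le_min le_rfl hNv
      linarith
  -- spend accounting
  have hfib : ∑ j, p j = ∑ i, fpaSpendI W b i := by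
    have h1 := Finset.sum_fiberwise (Finset.univ : Finset (Fin q)) (fun j => W b j)
      (fun j => p j)
    rw [← h1]
    apply Finset.sum_congr rfl
    intro i _
    apply Finset.sum_congr rfl
    intro j hj
    simp only [Finset.mem_filter] at hj
    simp only [fpaSpendI, hpdef, fpaSpendQ, hj.2]
  have hspend : ∑ j, p j ≤ fpaLW B v W b := by
    rw [hfib, fpaLW]
    exact Finset.sum_le_sum fun i _ => hbc i
  -- per-bidder bound
  have key : ∀ i, min (B i) (∑ j, π i j * v i j)
      ≤ min (B i) (fpaV v W b i) + ∑ j, π i j * p j := by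
    intro i
    have hVnn : 0 ≤ fpaV v W b i := Finset.sum_nonneg fun j _ => hv i j
    exact core (B i) (fpaV v W b i) (hB i) hVnn (fun j => v i j) p (fun j => π i j)
      (fun j => hv i j) (fun j => hvB i j) hp0 (fun j => hπ0 i j) (fun j => hπ1 i j)
      (eqH i)
  have hsumkey : allocLW B v π ≤ fpaLW B v W b + ∑ i, ∑ j, π i j * p j := by
    rw [allocLW, fpaLW, ← Finset.sum_add_distrib]
    exact Finset.sum_le_sum fun i _ => key i
  have hππ : ∑ i, ∑ j, π i j * p j ≤ ∑ j, p j := by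
    rw [Finset.sum_comm]
    apply Finset.sum_le_sum
    intro j _
    have h1 : ∑ i, π i j * p j = (∑ i, π i j) * p j := by
      rw [Finset.sum_mul]
    rw [h1]
    nlinarith [hπsum j, hp0 j]
  rw [hOPTeq]
  linarith
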